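/- Let f be a discrete Morse-Bott function on a finite abstract simplicial complex K and let C^red be a reduced collection for f. Then the reduced boundary operator over ℤ/2 satisfies ∂^{C^red}_{k−1} ∘ ∂^{C^red}_k = 0 for all k. -/

import Mathlib

open Finset

noncomputable section
open scoped Classical

/-- `σ` is a facet of `τ`: `σ ⊆ τ` and `dim σ = dim τ − 1`. -/
def Facet (σ τ : Finset ℕ) : Prop := σ ⊆ τ ∧ σ.card + 1 = τ.card

/-- A finite abstract simplicial complex: a finite family of nonempty finite sets
closed under taking nonempty subsets. -/
def IsComplex (K : Finset (Finset ℕ)) : Prop :=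
  (∀ σ ∈ K, σ.Nonempty) ∧ ∀ σ ∈ K, ∀ ν, ν ⊆ σ → ν.Nonempty → ν ∈ K

/-- The closure of a set of cells: all nonempty subsets of its cells. -/
def closureOf (S : Finset (Finset ℕ)) : Finset (Finset ℕ) :=
  S.biUnion fun σ => σ.powerset.filter fun ν => ν ≠ ∅

/-- The graph on `C` joining two cells whenever their closures intersect is connected. -/
def ConnectedOn (C : Finset (Finset ℕ)) : Prop :=
  ∀ a ∈ C, ∀ b ∈ C,
    Relation.ReflTransGen
      (fun x y => x ∈ C ∧ y ∈ C ∧ (closureOf {x} ∩ closureOf {y}).Nonempty) a b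

/-- A nonempty set of cells of `K`, all with the same `f`-value, whose
closure-intersection graph is connected. -/
def IsPreCollection (K : Finset (Finset ℕ)) (f : Finset ℕ → ℝ) (C : Finset (Finset ℕ)) :
    Prop :=
  C ⊆ K ∧ C.Nonempty ∧ (∀ σ ∈ C, ∀ τ ∈ C, f σ = f τ) ∧ ConnectedOn C

/-- A collection for `f`: a maximal constant-value connected set of cells. -/
def IsCollection (K : Finset (Finset ℕ)) (f : Finset ℕ → ℝ) (C : Finset (Finset ℕ)) :
    Prop :=
  IsPreCollection K f C ∧ ∀ C', IsPreCollection K f C' → C ⊆ C' → C' = C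

/-- `#{τ ∉ C : σ < τ, f(τ) < f(σ)}`. -/
def UpCount (K : Finset (Finset ℕ)) (f : Finset ℕ → ℝ) (C : Finset (Finset ℕ))
    (σ : Finset ℕ) : ℕ :=
  (K.filter fun τ => τ ∉ C ∧ Facet σ τ ∧ f τ < f σ).card

/-- `#{ν ∉ C : ν < σ, f(ν) > f(σ)}`. -/
def DownCount (K : Finset (Finset ℕ)) (f : Finset ℕ → ℝ) (C : Finset (Finset ℕ))
    (σ : Finset ℕ) : ℕ :=
  (K.filter fun ν => ν ∉ C ∧ Facet ν σ ∧ f σ < f ν).card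

/-- A discrete Morse-Bott function on `K`. -/
def IsMorseBott (K : Finset (Finset ℕ)) (f : Finset ℕ → ℝ) : Prop :=
  ∀ C, IsCollection K f C → ∀ σ ∈ C, UpCount K f C σ ≤ 1 ∧ DownCount K f C σ ≤ 1

/-- `σ` is upward noncritical w.r.t. `C`. -/
def UpNoncrit (K : Finset (Finset ℕ)) (f : Finset ℕ → ℝ) (C : Finset (Finset ℕ))
    (σ : Finset ℕ) : Prop :=
  ∃ w ∈ K, w ∉ C ∧ Facet σ w ∧ f w < f σ

/-- `σ` is downward noncritical w.r.t. `C`. -/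
def DownNoncrit (K : Finset (Finset ℕ)) (f : Finset ℕ → ℝ) (C : Finset (Finset ℕ))
    (σ : Finset ℕ) : Prop :=
  ∃ w ∈ K, w ∉ C ∧ Facet w σ ∧ f σ < f w

/-- The reduced collection `C^red`: the cells of `C` that are neither upward nor
downward noncritical w.r.t. `C`. -/
def reducedOf (K : Finset (Finset ℕ)) (f : Finset ℕ → ℝ) (C : Finset (Finset ℕ)) :
    Finset (Finset ℕ) :=
  C.filter fun σ => ¬ UpNoncrit K f C σ ∧ ¬ DownNoncrit K f C σ

/-- A noncritical pair: a two-element set `{σ, τ}` with `σ < τ` and `f σ ≥ f τ`. -/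
def IsNoncritPair (f : Finset ℕ → ℝ) (S : Finset (Finset ℕ)) : Prop :=
  ∃ σ τ, Facet σ τ ∧ f τ ≤ f σ ∧ S = {σ, τ}

/-- A discrete Morse function in Forman's sense. -/
def IsDiscreteMorse (K : Finset (Finset ℕ)) (g : Finset ℕ → ℝ) : Prop :=
  ∀ σ ∈ K, (K.filter fun τ => Facet σ τ ∧ g τ ≤ g σ).card ≤ 1 ∧
    (K.filter fun ν => Facet ν σ ∧ g σ ≤ g ν).card ≤ 1

/-- A critical cell of `g`. -/
def IsCritical (K : Finset (Finset ℕ)) (g : Finset ℕ → ℝ) (σ : Finset ℕ) : Prop :=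
  σ ∈ K ∧ (K.filter fun τ => Facet σ τ ∧ g τ ≤ g σ).card = 0 ∧
    (K.filter fun ν => Facet ν σ ∧ g σ ≤ g ν).card = 0

/-- The `k`-dimensional cells of `S`. -/
def cells (S : Finset (Finset ℕ)) (k : ℕ) : Finset (Finset ℕ) :=
  S.filter fun σ => σ.card = k + 1

/-- The `ℤ/2`-vector space with basis the `k`-dimensional cells of `S`. -/
abbrev Chain (S : Finset (Finset ℕ)) (k : ℕ) : Type :=
  ↥(cells S k) → ZMod 2

/-- The boundary operator `C_k(S) → C_j(S)` (used with `j = k − 1`), sending each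
`k`-cell of `S` to the sum of those of its facets that lie in `S`. -/
def bdry (S : Finset (Finset ℕ)) (j k : ℕ) : Chain S k →ₗ[ZMod 2] Chain S j :=
  Matrix.mulVecLin (Matrix.of fun (ν : ↥(cells S j)) (τ : ↥(cells S k)) =>
    if Facet ν.1 τ.1 then (1 : ZMod 2) else 0)

/-- `b_k(S) = dim (ker ∂_k / im ∂_{k+1})`, the `k`-th mod-2 Betti number of the
boundary complex of `S`. -/
def bettiOf (S : Finset (Finset ℕ)) (k : ℕ) : ℕ :=
  Module.finrank (ZMod 2)
    (↥(LinearMap.ker (bdry S (k - 1) k)) ⧸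
      Submodule.comap (LinearMap.ker (bdry S (k - 1) k)).subtype
        (LinearMap.range (bdry S k (k + 1))))

/-- The Poincaré polynomial `P_t(S) = Σ_k b_k(S) t^k`. -/
def PtOf (S : Finset (Finset ℕ)) : Polynomial ℕ :=
  ∑ k ∈ Finset.range (S.sup Finset.card), Polynomial.C (bettiOf S k) * Polynomial.X ^ k

/-- `dim H_k(N, E; ℤ/2)`: the homology of the quotient chain complex
`C_*(N)/C_*(E)`, computed via the relative chain complex with basis the cells of
`N \ E` (the image of the basis of `C_k(N)` in the quotient) and the induced
boundary. -/
def relBetti (N E : Finset (Finset ℕ)) (k : ℕ) : ℕ := bettiOf (N \ E) k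

/-- The relative Poincaré polynomial `Σ_k dim H_k(N, E; ℤ/2) t^k`. -/
def relPt (N E : Finset (Finset ℕ)) : Polynomial ℕ := PtOf (N \ E)

/-- The Euler characteristic `Σ_k (−1)^k dim H_k(S; ℤ/2)`. -/
def eulerOf (S : Finset (Finset ℕ)) : ℤ :=
  ∑ k ∈ Finset.range (S.sup Finset.card), (-1 : ℤ) ^ k * bettiOf S k

/-- The relative Euler characteristic `χ(N, E) = Σ_k (−1)^k dim H_k(N, E; ℤ/2)`. -/
def relEuler (N E : Finset (Finset ℕ)) : ℤ :=
  ∑ k ∈ Finset.range ((N \ E).sup Finset.card), (-1 : ℤ) ^ k * relBetti N E k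

/-! ### Auxiliary lemmas for statement6 -/

lemma exists_collection_mem (K : Finset (Finset ℕ)) (f : Finset ℕ → ℝ) {w : Finset ℕ}
    (hw : w ∈ K) : ∃ C, IsCollection K f C ∧ w ∈ C := by
  classical
  set P := K.powerset.filter (fun C => IsPreCollection K f C ∧ w ∈ C) with hP
  have hPne : P.Nonempty := by
    refine ⟨{w}, ?_⟩
    simp only [hP, Finset.mem_filter, Finset.mem_powerset]
    refine ⟨Finset.singleton_subset_iff.mpr hw,
      ⟨Finset.singleton_subset_iff.mpr hw, ⟨w, by simp⟩, by simp, ?_⟩, by simp⟩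
    intro a ha b hb
    simp only [Finset.mem_singleton] at ha hb
    subst ha; subst hb; exact Relation.ReflTransGen.refl
  obtain ⟨Cw, hCP, hmax⟩ := Finset.exists_max_image P Finset.card hPne
  simp only [hP, Finset.mem_filter, Finset.mem_powerset] at hCP
  refine ⟨Cw, ⟨hCP.2.1, ?_⟩, hCP.2.2⟩
  intro C' hC' hsub
  have hC'P : C' ∈ P := by
    simp only [hP, Finset.mem_filter, Finset.mem_powerset]
    exact ⟨hC'.1, hC', hsub hCP.2.2⟩
  exact (Finset.eq_of_subset_of_card_le hsub (hmax C' hC'P)).symm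

lemma mid_mem (K : Finset (Finset ℕ)) (f : Finset ℕ → ℝ) (C : Finset (Finset ℕ))
    (hK : IsComplex K) (hC : IsCollection K f C) {ν σ τ : Finset ℕ}
    (hν : ν ∈ reducedOf K f C) (hτ : τ ∈ reducedOf K f C)
    (hσK : σ ∈ K) (h1 : Facet ν σ) (h2 : Facet σ τ) : σ ∈ C := by
  classical
  simp only [reducedOf, Finset.mem_filter] at hν hτ
  obtain ⟨hνC, hνU, hνD⟩ := hν
  obtain ⟨hτC, hτU, hτD⟩ := hτ
  have hfν : f ν = f τ := hC.1.2.2.1 ν hνC τ hτC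
  by_contra hσC
  rcases lt_trichotomy (f σ) (f τ) with h | h | h
  · exact hνU ⟨σ, hσK, hσC, h1, by rw [hfν]; exact h⟩
  · -- f σ = f τ : contradict maximality of C
    have hνNe : ν.Nonempty := hK.1 ν (hC.1.1 hνC)
    have hνsub : ν ⊆ σ := h1.1
    set R := fun x y => x ∈ insert σ C ∧ y ∈ insert σ C ∧
      (closureOf {x} ∩ closureOf {y}).Nonempty with hR
    have hmono : ∀ a b, (a ∈ C ∧ b ∈ C ∧ (closureOf {a} ∩ closureOf {b}).Nonempty) →
        R a b := fun a b hab =>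
      ⟨Finset.mem_insert_of_mem hab.1, Finset.mem_insert_of_mem hab.2.1, hab.2.2⟩
    have hpath : ∀ x ∈ C, ∀ y ∈ C, Relation.ReflTransGen R x y := fun x hx y hy =>
      Relation.ReflTransGen.mono hmono x y (hC.1.2.2.2 x hx y hy)
    have hclo : ν ∈ closureOf {σ} ∩ closureOf {ν} := by
      simp only [closureOf, Finset.mem_inter, Finset.mem_biUnion, Finset.mem_singleton,
        Finset.mem_filter, Finset.mem_powerset]
      exact ⟨⟨σ, rfl, hνsub, hνNe.ne_empty⟩, ⟨ν, rfl, Finset.Subset.refl ν, hνNe.ne_empty⟩⟩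
    have hclo' : ν ∈ closureOf {ν} ∩ closureOf {σ} := by
      rw [Finset.inter_comm]; exact hclo
    have hRσν : R σ ν := ⟨Finset.mem_insert_self σ C, Finset.mem_insert_of_mem hνC, ⟨ν, hclo⟩⟩
    have hRνσ : R ν σ := ⟨Finset.mem_insert_of_mem hνC, Finset.mem_insert_self σ C, ⟨ν, hclo'⟩⟩
    have hpre : IsPreCollection K f (insert σ C) := by
      refine ⟨Finset.insert_subset hσK hC.1.1, ⟨σ, Finset.mem_insert_self _ _⟩, ?_, ?_⟩
      · intro a ha b hb
        rcases Finset.mem_insert.mp ha with rfl | ha' <;>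
          rcases Finset.mem_insert.mp hb with rfl | hb'
        · rfl
        · rw [h]; exact hC.1.2.2.1 τ hτC b hb'
        · rw [hC.1.2.2.1 a ha' τ hτC, ← h]
        · exact hC.1.2.2.1 a ha' b hb'
      · intro a ha b hb
        rcases Finset.mem_insert.mp ha with rfl | ha' <;>
          rcases Finset.mem_insert.mp hb with rfl | hb'
        · exact Relation.ReflTransGen.refl
        · exact (Relation.ReflTransGen.single hRσν).trans (hpath ν hνC b hb')
        · exact (hpath a ha' ν hνC).tail hRνσ
        · exact hpath a ha' b hb'
    have heq : insert σ C = C := hC.2 _ hpre (Finset.subset_insert σ C)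
    exact hσC (heq ▸ Finset.mem_insert_self σ C)
  · exact hτD ⟨σ, hσK, hσC, h2, h⟩

lemma mid_not_up (K : Finset (Finset ℕ)) (f : Finset ℕ → ℝ) (C : Finset (Finset ℕ))
    (hK : IsComplex K) (hf : IsMorseBott K f) (hC : IsCollection K f C)
    {ν σ : Finset ℕ} (hν : ν ∈ reducedOf K f C) (hσC : σ ∈ C) (h1 : Facet ν σ) :
    ¬ UpNoncrit K f C σ := by
  classical
  rintro ⟨w, hwK, hwC, hfac, hfw⟩
  simp only [reducedOf, Finset.mem_filter] at hν
  obtain ⟨hνC, hνU, -⟩ := hν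
  have hfσν : f σ = f ν := hC.1.2.2.1 σ hσC ν hνC
  have hwcard : σ.card + 1 = w.card := hfac.2
  have hcard : (w \ σ).card = 1 := by
    rw [Finset.card_sdiff_of_subset hfac.1]; omega
  obtain ⟨a, ha⟩ := Finset.card_eq_one.mp hcard
  have haw : a ∈ w ∧ a ∉ σ := by
    have h' : a ∈ w \ σ := ha ▸ Finset.mem_singleton_self a
    exact ⟨(Finset.mem_sdiff.mp h').1, (Finset.mem_sdiff.mp h').2⟩
  have haν : a ∉ ν := fun hmem => haw.2 (h1.1 hmem)
  set σ' := insert a ν with hσ'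
  have hσ'w : σ' ⊆ w := Finset.insert_subset haw.1 (h1.1.trans hfac.1)
  have hσ'K : σ' ∈ K := hK.2 w hwK σ' hσ'w ⟨a, Finset.mem_insert_self a ν⟩
  have hcardσ' : σ'.card = σ.card := by
    rw [Finset.card_insert_of_notMem haν]; exact h1.2
  have hfacνσ' : Facet ν σ' :=
    ⟨Finset.subset_insert a ν, by rw [Finset.card_insert_of_notMem haν]⟩
  have hfacσ'w : Facet σ' w := ⟨hσ'w, by rw [hcardσ']; exact hfac.2⟩
  have hσ'ne : σ' ≠ σ := fun hh => haw.2 (hh ▸ Finset.mem_insert_self a ν)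
  have hfσ' : f ν ≤ f σ' := by
    by_cases hem : σ' ∈ C
    · exact le_of_eq (hC.1.2.2.1 ν hνC σ' hem)
    · by_contra hlt
      exact hνU ⟨σ', hσ'K, hem, hfacνσ', lt_of_not_ge hlt⟩
  obtain ⟨Cw, hCw, hwCw⟩ := exists_collection_mem K f hwK
  have hconst : ∀ x ∈ Cw, f x = f w := fun x hx => hCw.1.2.2.1 x hx w hwCw
  have hσCw : σ ∉ Cw := fun hh => absurd (hconst σ hh) (by linarith)
  have hσ'Cw : σ' ∉ Cw := fun hh => absurd (hconst σ' hh) (by linarith)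
  have h2 : 1 < DownCount K f Cw w := by
    rw [DownCount]
    apply Finset.one_lt_card.mpr
    refine ⟨σ, ?_, σ', ?_, hσ'ne.symm⟩
    · exact Finset.mem_filter.mpr ⟨hC.1.1 hσC, hσCw, hfac, hfw⟩
    · exact Finset.mem_filter.mpr ⟨hσ'K, hσ'Cw, hfacσ'w, by linarith⟩
  have := (hf Cw hCw w hwCw).2
  omega

lemma mid_not_down (K : Finset (Finset ℕ)) (f : Finset ℕ → ℝ) (C : Finset (Finset ℕ))
    (hK : IsComplex K) (hf : IsMorseBott K f) (hC : IsCollection K f C)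
    {σ τ : Finset ℕ} (hτ : τ ∈ reducedOf K f C) (hσC : σ ∈ C) (h2 : Facet σ τ) :
    ¬ DownNoncrit K f C σ := by
  classical
  rintro ⟨w, hwK, hwC, hfac, hfw⟩
  simp only [reducedOf, Finset.mem_filter] at hτ
  obtain ⟨hτC, -, hτD⟩ := hτ
  have hfστ : f σ = f τ := hC.1.2.2.1 σ hσC τ hτC
  have hwcard : w.card + 1 = σ.card := hfac.2
  have hcard : (τ \ σ).card = 1 := by
    rw [Finset.card_sdiff_of_subset h2.1]
    have := h2.2; omega
  obtain ⟨b, hb⟩ := Finset.card_eq_one.mp hcard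
  have hbτ : b ∈ τ ∧ b ∉ σ := by
    have h' : b ∈ τ \ σ := hb ▸ Finset.mem_singleton_self b
    exact ⟨(Finset.mem_sdiff.mp h').1, (Finset.mem_sdiff.mp h').2⟩
  have hbw : b ∉ w := fun hmem => hbτ.2 (hfac.1 hmem)
  set σ' := insert b w with hσ'
  have hσ'τ : σ' ⊆ τ := Finset.insert_subset hbτ.1 (hfac.1.trans h2.1)
  have hτK : τ ∈ K := hC.1.1 hτC
  have hσ'K : σ' ∈ K := hK.2 τ hτK σ' hσ'τ ⟨b, Finset.mem_insert_self b w⟩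
  have hcardσ' : σ'.card = σ.card := by
    rw [Finset.card_insert_of_notMem hbw]; exact hfac.2
  have hfacwσ' : Facet w σ' :=
    ⟨Finset.subset_insert b w, by rw [Finset.card_insert_of_notMem hbw]⟩
  have hfacσ'τ : Facet σ' τ := ⟨hσ'τ, by rw [hcardσ']; exact h2.2⟩
  have hσ'ne : σ' ≠ σ := fun hh => hbτ.2 (hh ▸ Finset.mem_insert_self b w)
  have hfσ' : f σ' ≤ f τ := by
    by_cases hem : σ' ∈ C
    · exact le_of_eq (hC.1.2.2.1 σ' hem τ hτC)
    · by_contra hlt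
      exact hτD ⟨σ', hσ'K, hem, hfacσ'τ, lt_of_not_ge hlt⟩
  obtain ⟨Cw, hCw, hwCw⟩ := exists_collection_mem K f hwK
  have hconst : ∀ x ∈ Cw, f x = f w := fun x hx => hCw.1.2.2.1 x hx w hwCw
  have hσCw : σ ∉ Cw := fun hh => absurd (hconst σ hh) (by linarith)
  have hσ'Cw : σ' ∉ Cw := fun hh => absurd (hconst σ' hh) (by linarith)
  have hcount : 1 < UpCount K f Cw w := by
    rw [UpCount]
    apply Finset.one_lt_card.mpr
    refine ⟨σ, ?_, σ', ?_, hσ'ne.symm⟩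
    · exact Finset.mem_filter.mpr ⟨hC.1.1 hσC, hσCw, hfac, hfw⟩
    · exact Finset.mem_filter.mpr ⟨hσ'K, hσ'Cw, hfacwσ', by linarith⟩
  have := (hf Cw hCw w hwCw).1
  omega


lemma mid_mem_reduced (K : Finset (Finset ℕ)) (f : Finset ℕ → ℝ) (C : Finset (Finset ℕ))
    (hK : IsComplex K) (hf : IsMorseBott K f) (hC : IsCollection K f C) {ν σ τ : Finset ℕ}
    (hν : ν ∈ reducedOf K f C) (hτ : τ ∈ reducedOf K f C)
    (hσK : σ ∈ K) (h1 : Facet ν σ) (h2 : Facet σ τ) : σ ∈ reducedOf K f C := by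
  have hσC : σ ∈ C := mid_mem K f C hK hC hν hτ hσK h1 h2
  simp only [reducedOf, Finset.mem_filter]
  exact ⟨hσC, mid_not_up K f C hK hf hC hν hσC h1, mid_not_down K f C hK hf hC hτ hσC h2⟩

/-- The reduced boundary operator of a reduced collection over `ℤ/2`
satisfies `∂_{k−1} ∘ ∂_k = 0` for all `k` (here in the form `∂_k ∘ ∂_{k+1} = 0`,
for all `k`, where `∂_k : C_k → C_{k−1}`). -/
theorem statement6 (K : Finset (Finset ℕ)) (hK : IsComplex K) (f : Finset ℕ → ℝ)
    (hf : IsMorseBott K f) (C : Finset (Finset ℕ)) (hC : IsCollection K f C) (k : ℕ) :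
    (bdry (reducedOf K f C) (k - 1) k).comp (bdry (reducedOf K f C) k (k + 1)) = 0 := by
  classical
  set S := reducedOf K f C with hS
  have hSK : S ⊆ K := (Finset.filter_subset _ _).trans hC.1.1
  have hmat : (Matrix.of fun (ν : ↥(cells S (k-1))) (σ : ↥(cells S k)) =>
      if Facet ν.1 σ.1 then (1 : ZMod 2) else 0) *
      (Matrix.of fun (σ : ↥(cells S k)) (τ : ↥(cells S (k+1))) =>
      if Facet σ.1 τ.1 then (1 : ZMod 2) else 0) = 0 := by
    ext ν τ
    rw [Matrix.mul_apply]
    simp only [Matrix.of_apply, Matrix.zero_apply]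
    have hterm : ∀ σ : ↥(cells S k),
        (if Facet ν.1 σ.1 then (1 : ZMod 2) else 0) *
          (if Facet σ.1 τ.1 then (1 : ZMod 2) else 0) =
        if Facet ν.1 σ.1 ∧ Facet σ.1 τ.1 then (1 : ZMod 2) else 0 := by
      intro σ
      by_cases hA : Facet ν.1 σ.1 <;> by_cases hB : Facet σ.1 τ.1 <;>
        simp [hA, hB]
    rw [Finset.sum_congr rfl (fun σ _ => hterm σ)]
    rw [Finset.sum_coe_sort (cells S k)
      (fun σ => if Facet ν.1 σ ∧ Facet σ τ.1 then (1 : ZMod 2) else 0)]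
    rw [Finset.sum_boole]
    set T := (cells S k).filter (fun σ => Facet ν.1 σ ∧ Facet σ τ.1) with hT
    rcases T.eq_empty_or_nonempty with hTe | ⟨σ₀, hσ₀⟩
    · rw [hTe]; simp
    · -- T is nonempty; compute it
      have hτS : τ.1 ∈ S ∧ τ.1.card = k + 2 := by
        have h' := τ.2
        simp only [cells, Finset.mem_filter] at h'
        exact ⟨h'.1, h'.2⟩
      have hνS : ν.1 ∈ S := by
        have h' := ν.2
        simp only [cells, Finset.mem_filter] at h'
        exact h'.1
      have hτK : τ.1 ∈ K := hSK hτS.1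
      simp only [hT, Finset.mem_filter, cells] at hσ₀
      obtain ⟨⟨hσ₀S, hσ₀card⟩, hfν₀, hf₀τ⟩ := hσ₀
      have hνcard : ν.1.card = k := by
        have := hfν₀.2; omega
      have hντ : ν.1 ⊆ τ.1 := hfν₀.1.trans hf₀τ.1
      have hTeq : T = (τ.1 \ ν.1).image (fun a => insert a ν.1) := by
        apply Finset.ext
        intro σ
        simp only [hT, Finset.mem_filter, Finset.mem_image, Finset.mem_sdiff, cells]
        constructor
        · rintro ⟨⟨hσS, hσcard⟩, hfνσ, hfστ⟩
          have hc1 : (σ \ ν.1).card = 1 := by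
            rw [Finset.card_sdiff_of_subset hfνσ.1]; omega
          obtain ⟨a, ha⟩ := Finset.card_eq_one.mp hc1
          have ha' : a ∈ σ \ ν.1 := ha ▸ Finset.mem_singleton_self a
          refine ⟨a, ⟨hfστ.1 (Finset.mem_sdiff.mp ha').1, (Finset.mem_sdiff.mp ha').2⟩, ?_⟩
          have hun : ν.1 ∪ (σ \ ν.1) = σ := Finset.union_sdiff_of_subset hfνσ.1
          rw [ha] at hun
          rw [Finset.insert_eq, Finset.union_comm]
          exact hun
        · rintro ⟨a, ⟨haτ, haν⟩, rfl⟩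
          have hsub : insert a ν.1 ⊆ τ.1 := Finset.insert_subset haτ hντ
          have hcard : (insert a ν.1).card = k + 1 := by
            rw [Finset.card_insert_of_notMem haν, hνcard]
          have hmemK : insert a ν.1 ∈ K :=
            hK.2 τ.1 hτK _ hsub ⟨a, Finset.mem_insert_self a ν.1⟩
          have hfν' : Facet ν.1 (insert a ν.1) :=
            ⟨Finset.subset_insert a ν.1, by rw [Finset.card_insert_of_notMem haν]⟩
          have hfτ' : Facet (insert a ν.1) τ.1 := ⟨hsub, by rw [hcard, hτS.2]⟩
          exact ⟨⟨mid_mem_reduced K f C hK hf hC hνS hτS.1 hmemK hfν' hfτ', hcard⟩,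
            hfν', hfτ'⟩
      have hTcard : T.card = 2 := by
        rw [hTeq]
        rw [Finset.card_image_of_injOn]
        · rw [Finset.card_sdiff_of_subset hντ, hτS.2, hνcard]; omega
        · intro a ha b hb hab
          simp only [Finset.coe_sdiff, Set.mem_diff, Finset.mem_coe] at ha hb
          have hab' : insert a ν.1 = insert b ν.1 := hab
          have : a ∈ insert b ν.1 := hab' ▸ Finset.mem_insert_self a ν.1
          rcases Finset.mem_insert.mp this with h | h
          · exact h
          · exact absurd h ha.2
      rw [hTcard]
      decide
  show (Matrix.mulVecLin _).comp (Matrix.mulVecLin _) = 0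
  rw [← Matrix.mulVecLin_mul, hmat, Matrix.mulVecLin_zero]
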